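/- Fix $k \ge 1$. With $v_\infty = \sum_{n\ge 1} f_n v_n$ where $v_n = [1, q^n z_2, z_2]$ and $f_n = \frac{(-1)^{n-1} q^{n(n-1)/2}(1-q^{2n}z_1z_2^2)}{(q)_\infty (q^{n+1}z_1z_2^2)_\infty (q)_{n-1}(1 - q^n z_2)}$, one has $B v_\infty = f_1 v_1$, where $B$ is the extremal operator $B(f[P,Q,R]) = S\big(\frac{f(1-Q/P)[P,R,q^{-1}z_2P]}{(1-z_1z_2Q/P)(1-Q/R)(1-R/P)}\big)$ extended by linearity, and $S$ is the substitution $z_2 \mapsto qz_2$. -/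

import Mathlib

namespace Boson

/-- Formal power series in `q = X 0`, `z₁ = X 1`, `z₂ = X 2` over `ℚ`. -/
abbrev R := MvPowerSeries (Fin 3) ℚ

noncomputable def qv : R := MvPowerSeries.X 0
noncomputable def z1v : R := MvPowerSeries.X 1
noncomputable def z2v : R := MvPowerSeries.X 2

/-- The infinite Pochhammer symbol `(a;q)_∞ = ∏_{j≥0}(1 - a qʲ)`, defined
coefficientwise: when `a` has vanishing constant term the coefficient of any
monomial `d` in the partial products stabilizes as soon as the number of factors
exceeds the total degree of `d`. -/
noncomputable def pochInf (a : R) : R := fun d =>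
  MvPowerSeries.coeff d
    (∏ j ∈ Finset.range (d 0 + d 1 + d 2 + 1), (1 - a * qv ^ j))

/-- The finite Pochhammer symbol `(q;q)_n = ∏_{j=0}^{n-1}(1 - q^{j+1})`. -/
noncomputable def pochFin (n : ℕ) : R := ∏ j ∈ Finset.range n, (1 - qv ^ (j + 1))

open MvPowerSeries Finset

-- coefficient of a "fun d => ..." power series
lemma coeff_mk (f : (Fin 3 →₀ ℕ) → ℚ) (d : Fin 3 →₀ ℕ) :
    MvPowerSeries.coeff d (f : R) = f d := rfl

lemma constCoeff_qv : MvPowerSeries.constantCoeff qv = 0 := by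
  simp [qv]

-- coefficients killed by q-power
lemma coeff_qpow_mul_eq_zero {m : ℕ} {g : R} {d : Fin 3 →₀ ℕ} (h : d 0 < m) :
    MvPowerSeries.coeff d (qv ^ m * g) = 0 := by
  have : (MvPowerSeries.X (0 : Fin 3) : R) ^ m ∣ qv ^ m * g := Dvd.intro g rfl
  exact MvPowerSeries.X_pow_dvd_iff.mp this d h

lemma eq_zero_of_forall_qpow_dvd {f : R} (h : ∀ M : ℕ, qv ^ M ∣ f) : f = 0 := by
  ext d
  obtain ⟨g, hg⟩ := h (d 0 + 1)
  rw [hg, coeff_qpow_mul_eq_zero (Nat.lt_succ_self _), map_zero]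

-- stability of truncated products
lemma qpow_dvd_prod_sub (b : R) (M M' : ℕ) (h : M ≤ M') :
    qv ^ M ∣ (∏ j ∈ range M', (1 - qv * b * qv ^ j)) - ∏ j ∈ range M, (1 - qv * b * qv ^ j) := by
  induction M' with
  | zero => interval_cases M; simp
  | succ K ih =>
    rcases Nat.lt_or_ge M (K+1) with hlt | hge
    · have hK : M ≤ K := Nat.lt_succ_iff.mp hlt
      have h1 := ih hK
      rw [prod_range_succ]
      have : (∏ j ∈ range K, (1 - qv * b * qv ^ j)) * (1 - qv * b * qv ^ K) -
          ∏ j ∈ range M, (1 - qv * b * qv ^ j) =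
          ((∏ j ∈ range K, (1 - qv * b * qv ^ j)) - ∏ j ∈ range M, (1 - qv * b * qv ^ j))
          - (∏ j ∈ range K, (1 - qv * b * qv ^ j)) * (qv * b * qv ^ K) := by ring
      rw [this]
      refine dvd_sub h1 ?_
      have : qv ^ M ∣ qv ^ K * qv := by
        rw [← pow_succ]
        exact pow_dvd_pow _ (Nat.le_succ_of_le hK)
      calc qv ^ M ∣ qv ^ K * qv := this
        _ ∣ (∏ j ∈ range K, (1 - qv * b * qv ^ j)) * (qv * b * qv ^ K) :=
          ⟨(∏ j ∈ range K, (1 - qv * b * qv ^ j)) * b, by ring⟩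
    · have : M = K + 1 := le_antisymm h hge
      subst this; simp

lemma coeff_pochInf (b : R) (d : Fin 3 →₀ ℕ) {M : ℕ} (h : d 0 < M) :
    MvPowerSeries.coeff d (pochInf (qv * b)) =
      MvPowerSeries.coeff d (∏ j ∈ range M, (1 - qv * b * qv ^ j)) := by
  have h0 : MvPowerSeries.coeff d (pochInf (qv * b)) =
      MvPowerSeries.coeff d (∏ j ∈ range (d 0 + d 1 + d 2 + 1), (1 - (qv * b) * qv ^ j)) := rfl
  rw [h0]
  set M₀ := d 0 + d 1 + d 2 + 1 with hM₀
  have h₀ : d 0 < M₀ := by omega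
  rcases le_total M₀ M with hle | hle
  · obtain ⟨g, hg⟩ := qpow_dvd_prod_sub b M₀ M hle
    have := coeff_qpow_mul_eq_zero (g := g) (d := d) h₀
    rw [← hg] at this
    have h2 : MvPowerSeries.coeff d (∏ j ∈ range M, (1 - qv * b * qv ^ j)) -
        MvPowerSeries.coeff d (∏ j ∈ range M₀, (1 - qv * b * qv ^ j)) = 0 := by
      rw [← map_sub]; exact this
    linarith [h2]
  · obtain ⟨g, hg⟩ := qpow_dvd_prod_sub b M M₀ hle
    have := coeff_qpow_mul_eq_zero (g := g) (d := d) h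
    rw [← hg] at this
    have h2 : MvPowerSeries.coeff d (∏ j ∈ range M₀, (1 - qv * b * qv ^ j)) -
        MvPowerSeries.coeff d (∏ j ∈ range M, (1 - qv * b * qv ^ j)) = 0 := by
      rw [← map_sub]; exact this
    linarith [h2]

lemma qpow_dvd_pochInf_sub (b : R) (M : ℕ) :
    qv ^ M ∣ pochInf (qv * b) - ∏ j ∈ range M, (1 - qv * b * qv ^ j) := by
  show (MvPowerSeries.X (0:Fin 3) : R) ^ M ∣ _
  rw [MvPowerSeries.X_pow_dvd_iff]
  intro d hd
  rw [map_sub, coeff_pochInf b d hd, sub_self]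

lemma pochInf_rec (b : R) :
    pochInf (qv * b) = (1 - qv * b) * pochInf (qv * (b * qv)) := by
  have key : ∀ M : ℕ, qv ^ M ∣ pochInf (qv * b) - (1 - qv * b) * pochInf (qv * (b * qv)) := by
    intro M
    obtain ⟨g1, hg1⟩ := qpow_dvd_pochInf_sub b (M + 1)
    obtain ⟨g2, hg2⟩ := qpow_dvd_pochInf_sub (b * qv) M
    have hsplit : ∏ j ∈ range (M + 1), (1 - qv * b * qv ^ j) =
        (1 - qv * b) * ∏ j ∈ range M, (1 - qv * (b * qv) * qv ^ j) := by
      rw [prod_range_succ']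
      have hc : ∀ j ∈ range M, (1 - qv * b * qv ^ (j + 1)) = (1 - qv * (b * qv) * qv ^ j) :=
        fun j _ => by ring
      rw [prod_congr rfl hc]
      ring
    have : pochInf (qv * b) - (1 - qv * b) * pochInf (qv * (b * qv)) =
        qv ^ (M + 1) * g1 - (1 - qv * b) * (qv ^ M * g2) := by
      have e1 : pochInf (qv * b) = ∏ j ∈ range (M+1), (1 - qv * b * qv ^ j) + qv ^ (M+1) * g1 := by
        linear_combination hg1
      have e2 : pochInf (qv * (b * qv)) =
          ∏ j ∈ range M, (1 - qv * (b * qv) * qv ^ j) + qv ^ M * g2 := by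
        linear_combination hg2
      rw [e1, e2, hsplit]; ring
    rw [this]
    exact dvd_sub ⟨qv * g1, by ring⟩ ⟨(1 - qv * b) * g2, by ring⟩
  have := eq_zero_of_forall_qpow_dvd key
  linear_combination this

lemma pochInf_split (b : R) (n : ℕ) :
    pochInf (qv * b) =
      (∏ j ∈ range n, (1 - qv * b * qv ^ j)) * pochInf (qv * (b * qv ^ n)) := by
  induction n with
  | zero => simp
  | succ m ih =>
    rw [ih, pochInf_rec (b * qv ^ m), prod_range_succ,
      show b * qv ^ m * qv = b * qv ^ (m + 1) from by ring]
    ring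

lemma constCoeff_pochInf (b : R) :
    MvPowerSeries.constantCoeff (pochInf (qv * b)) = 1 := by
  have : MvPowerSeries.constantCoeff (pochInf (qv * b)) =
      MvPowerSeries.coeff 0 (pochInf (qv * b)) := rfl
  rw [this, coeff_pochInf b 0 (M := 1) (by simp), prod_range_one]
  rw [map_sub, MvPowerSeries.coeff_zero_eq_constantCoeff_apply,
    MvPowerSeries.coeff_zero_eq_constantCoeff_apply]
  simp [constCoeff_qv]

lemma constCoeff_z1v : MvPowerSeries.constantCoeff z1v = 0 := by simp [z1v]
lemma constCoeff_z2v : MvPowerSeries.constantCoeff z2v = 0 := by simp [z2v]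

lemma constCoeff_pochInf' (a b : R) (h : a = qv * b) :
    MvPowerSeries.constantCoeff (pochInf a) = 1 := by
  rw [h]; exact constCoeff_pochInf b

lemma constCoeff_pochFin (n : ℕ) :
    MvPowerSeries.constantCoeff (pochFin n) = 1 := by
  rw [pochFin, map_prod]
  refine Finset.prod_eq_one fun j _ => ?_
  simp [constCoeff_qv]

lemma div_eq_div {a b U V : R}
    (hU : MvPowerSeries.constantCoeff U = 1)
    (hV : MvPowerSeries.constantCoeff V = 1)
    (h : a * V = b * U) : a * U⁻¹ = b * V⁻¹ := by
  have hU' : MvPowerSeries.constantCoeff U ≠ 0 := by rw [hU]; exact one_ne_zero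
  have hV' : MvPowerSeries.constantCoeff V ≠ 0 := by rw [hV]; exact one_ne_zero
  calc a * U⁻¹ = a * U⁻¹ * (V * V⁻¹) := by rw [MvPowerSeries.mul_inv_cancel V hV', mul_one]
    _ = (a * V) * (U⁻¹ * V⁻¹) := by ring
    _ = (b * U) * (U⁻¹ * V⁻¹) := by rw [h]
    _ = b * (U * U⁻¹) * V⁻¹ := by ring
    _ = b * V⁻¹ := by rw [MvPowerSeries.mul_inv_cancel U hU', mul_one]

lemma inv_mul_inv {A B : R}
    (hA : MvPowerSeries.constantCoeff A = 1)
    (hB : MvPowerSeries.constantCoeff B = 1) :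
    (A * B)⁻¹ = A⁻¹ * B⁻¹ := by
  have hA' : MvPowerSeries.constantCoeff A ≠ 0 := by rw [hA]; exact one_ne_zero
  have hB' : MvPowerSeries.constantCoeff B ≠ 0 := by rw [hB]; exact one_ne_zero
  have hAB : MvPowerSeries.constantCoeff (A * B) ≠ 0 := by
    rw [map_mul, hA, hB, mul_one]; exact one_ne_zero
  rw [MvPowerSeries.inv_eq_iff_mul_eq_one hAB]
  calc A⁻¹ * B⁻¹ * (A * B) = (A * A⁻¹) * (B * B⁻¹) := by ring
    _ = 1 := by
        rw [MvPowerSeries.mul_inv_cancel A hA', MvPowerSeries.mul_inv_cancel B hB', mul_one]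

/-- The formal sum `∑_{n≥1} t n`, defined coefficientwise: applicable when the
`n`-th term is divisible by `q^{n(n-1)/2}`, so that the coefficient of any
monomial `d` in the partial sums stabilizes. -/
noncomputable def sumInf (t : ℕ → R) : R := fun d =>
  MvPowerSeries.coeff d (∑ n ∈ Finset.range (d 0 + d 1 + d 2 + 2), t (n + 1))

/-- The scalar part
`f_n = (-1)^{n-1} q^{n(n-1)/2} (1-q^{2n}z₁z₂²) / ((q)_∞ (q^{n+1}z₁z₂²)_∞ (q)_{n-1} (1-qⁿz₂))`
(inverses are taken in `ℚ[[q,z₁,z₂]]`; every inverted factor has constant term `1`). -/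
noncomputable def fn (n : ℕ) : R :=
  (-1 : R) ^ (n - 1) * qv ^ (n * (n - 1) / 2) * (1 - qv ^ (2 * n) * z1v * z2v ^ 2) *
    (pochInf qv * pochInf (qv ^ (n + 1) * z1v * z2v ^ 2) * pochFin (n - 1) *
      (1 - qv ^ n * z2v))⁻¹

/-- The shift `S f_n` of the scalar part `f_n` under `z₂ ↦ q z₂`, written out
explicitly (each occurrence of `z₂` in `f_n` is replaced by `q z₂`). -/
noncomputable def fnS (n : ℕ) : R :=
  (-1 : R) ^ (n - 1) * qv ^ (n * (n - 1) / 2) * (1 - qv ^ (2 * n + 2) * z1v * z2v ^ 2) *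
    (pochInf qv * pochInf (qv ^ (n + 3) * z1v * z2v ^ 2) * pochFin (n - 1) *
      (1 - qv ^ (n + 1) * z2v))⁻¹

/-- The `(i,l)`-component of `B(fₙ vₙ)` (for `vₙ = [1, qⁿz₂, z₂]`), written after
the shift `S : z₂ ↦ qz₂`:
`S( fₙ (1-qⁿz₂) [1, z₂, q⁻¹z₂] / ((1-qⁿz₁z₂²)(1-qⁿ)(1-z₂)) )`,
with every denominator expanded in non-negative powers. -/
noncomputable def Bterm (n i l : ℕ) : R :=
  fnS n * (1 - qv ^ (n + 1) * z2v) *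
    ((1 - qv ^ (n + 2) * z1v * z2v ^ 2) * (1 - qv ^ n) * (1 - qv * z2v))⁻¹ *
    (qv * z2v) ^ (l - i) * z2v ^ i

/-- `PX n = ∏_{j<n} (1 - q^{j+3} z₁ z₂²)`, i.e. the finite Pochhammer `(qx)_n`
for `x = q² z₁ z₂²`. -/
noncomputable def PX (n : ℕ) : R := ∏ j ∈ Finset.range n, (1 - qv ^ (j + 3) * z1v * z2v ^ 2)

/-- `u m` is the numerator of the `n = m+1` term of the telescoping sum. -/
noncomputable def uu (m : ℕ) : R :=
  (-1 : R) ^ m * qv ^ ((m + 1) * m / 2) * (1 - qv ^ (2 * (m + 1) + 2) * z1v * z2v ^ 2) * PX m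

lemma poch_x_split (n : ℕ) :
    pochInf (qv ^ 3 * z1v * z2v ^ 2) = PX n * pochInf (qv ^ (n + 3) * z1v * z2v ^ 2) := by
  have h := pochInf_split (qv ^ 2 * z1v * z2v ^ 2) n
  rw [show qv * (qv ^ 2 * z1v * z2v ^ 2) = qv ^ 3 * z1v * z2v ^ 2 from by ring,
    show qv * (qv ^ 2 * z1v * z2v ^ 2 * qv ^ n) = qv ^ (n + 3) * z1v * z2v ^ 2 from by ring] at h
  rw [h, PX]
  congr 1
  exact Finset.prod_congr rfl fun j _ => by ring

lemma constCoeff_K :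
    MvPowerSeries.constantCoeff
      (pochInf qv * pochInf (qv ^ 3 * z1v * z2v ^ 2) * (1 - qv * z2v)) = 1 := by
  rw [map_mul, map_mul,
    constCoeff_pochInf' qv 1 (by ring),
    constCoeff_pochInf' _ (qv ^ 2 * z1v * z2v ^ 2) (by ring)]
  simp [constCoeff_qv, constCoeff_z2v]

lemma fn1_eq :
    fn 1 = (pochInf qv * pochInf (qv ^ 3 * z1v * z2v ^ 2) * (1 - qv * z2v))⁻¹ := by
  have hrec := pochInf_rec (qv * z1v * z2v ^ 2)
  rw [show qv * (qv * z1v * z2v ^ 2) = qv ^ 2 * z1v * z2v ^ 2 from by ring,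
    show qv * (qv * z1v * z2v ^ 2 * qv) = qv ^ 3 * z1v * z2v ^ 2 from by ring] at hrec
  have hU : MvPowerSeries.constantCoeff
      (pochInf qv * pochInf (qv ^ (1 + 1) * z1v * z2v ^ 2) * pochFin (1 - 1) *
        (1 - qv ^ 1 * z2v)) = 1 := by
    rw [map_mul, map_mul, map_mul,
      constCoeff_pochInf' qv 1 (by ring),
      constCoeff_pochInf' _ (qv ^ 1 * z1v * z2v ^ 2) (by ring),
      constCoeff_pochFin]
    simp [constCoeff_qv, constCoeff_z2v]
  have key := div_eq_div (a := (-1 : R) ^ (1 - 1) * qv ^ (1 * (1 - 1) / 2) *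
      (1 - qv ^ (2 * 1) * z1v * z2v ^ 2)) (b := 1) hU constCoeff_K ?_
  · rw [fn]
    calc (-1 : R) ^ (1 - 1) * qv ^ (1 * (1 - 1) / 2) * (1 - qv ^ (2 * 1) * z1v * z2v ^ 2) *
          (pochInf qv * pochInf (qv ^ (1 + 1) * z1v * z2v ^ 2) * pochFin (1 - 1) *
            (1 - qv ^ 1 * z2v))⁻¹
        = 1 * (pochInf qv * pochInf (qv ^ 3 * z1v * z2v ^ 2) * (1 - qv * z2v))⁻¹ := key
      _ = _ := one_mul _
  · show _ = 1 * _
    rw [one_mul]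
    norm_num
    rw [pochFin, hrec]
    simp only [Finset.range_zero, Finset.prod_empty]
    ring

lemma Bterm_eq (m i l : ℕ) :
    Bterm (m + 1) i l = uu m * (pochFin (m + 1))⁻¹ *
      (pochInf qv * pochInf (qv ^ 3 * z1v * z2v ^ 2) * (1 - qv * z2v))⁻¹ *
      ((qv * z2v) ^ (l - i) * z2v ^ i) := by
  set V : R := pochInf qv * pochInf (qv ^ (m + 1 + 3) * z1v * z2v ^ 2) * pochFin m *
    (1 - qv ^ (m + 1 + 1) * z2v) with hVdef
  set W : R := (1 - qv ^ (m + 1 + 2) * z1v * z2v ^ 2) * (1 - qv ^ (m + 1)) * (1 - qv * z2v)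
    with hWdef
  set K : R := pochInf qv * pochInf (qv ^ 3 * z1v * z2v ^ 2) * (1 - qv * z2v) with hKdef
  have hV : MvPowerSeries.constantCoeff V = 1 := by
    rw [hVdef, map_mul, map_mul, map_mul,
      constCoeff_pochInf' qv 1 (by ring),
      constCoeff_pochInf' _ (qv ^ (m + 1 + 2) * z1v * z2v ^ 2) (by ring),
      constCoeff_pochFin]
    simp [constCoeff_qv, constCoeff_z2v]
  have hW : MvPowerSeries.constantCoeff W = 1 := by
    rw [hWdef]
    simp [map_mul, constCoeff_qv, constCoeff_z1v, constCoeff_z2v]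
  have hK : MvPowerSeries.constantCoeff K = 1 := constCoeff_K
  have hP : MvPowerSeries.constantCoeff (pochFin (m + 1)) = 1 := constCoeff_pochFin _
  have hVW : MvPowerSeries.constantCoeff (V * W) = 1 := by
    rw [map_mul, hV, hW, mul_one]
  have hPK : MvPowerSeries.constantCoeff (pochFin (m + 1) * K) = 1 := by
    rw [map_mul, hP, hK, mul_one]
  have cross : ((-1 : R) ^ m * qv ^ ((m + 1) * m / 2) *
        (1 - qv ^ (2 * (m + 1) + 2) * z1v * z2v ^ 2) * (1 - qv ^ (m + 1 + 1) * z2v) *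
        ((qv * z2v) ^ (l - i) * z2v ^ i)) * (pochFin (m + 1) * K) =
      (uu m * ((qv * z2v) ^ (l - i) * z2v ^ i)) * (V * W) := by
    rw [hKdef, hVdef, hWdef, uu, poch_x_split (m + 1),
      show PX (m + 1) = PX m * (1 - qv ^ (m + 3) * z1v * z2v ^ 2) from by
        rw [PX, PX, Finset.prod_range_succ],
      show pochFin (m + 1) = pochFin m * (1 - qv ^ (m + 1)) from by
        rw [pochFin, pochFin, Finset.prod_range_succ]]
    ring
  calc Bterm (m + 1) i l
      = ((-1 : R) ^ m * qv ^ ((m + 1) * m / 2) *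
          (1 - qv ^ (2 * (m + 1) + 2) * z1v * z2v ^ 2) * (1 - qv ^ (m + 1 + 1) * z2v) *
          ((qv * z2v) ^ (l - i) * z2v ^ i)) * (V * W)⁻¹ := by
        simp only [Bterm, fnS, Nat.add_sub_cancel]
        rw [inv_mul_inv hV hW]
        ring
    _ = (uu m * ((qv * z2v) ^ (l - i) * z2v ^ i)) * (pochFin (m + 1) * K)⁻¹ :=
        div_eq_div hVW hPK cross
    _ = uu m * (pochFin (m + 1))⁻¹ * K⁻¹ * ((qv * z2v) ^ (l - i) * z2v ^ i) := by
        rw [inv_mul_inv hP hK]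
        ring

lemma tri_succ (N : ℕ) : (N + 1) * (N + 1 + 1) / 2 = N * (N + 1) / 2 + (N + 1) := by
  have h2 : (N + 1) * (N + 1 + 1) = N * (N + 1) + (N + 1) * 2 := by ring
  rw [h2, Nat.add_mul_div_right _ _ (by norm_num : (0:ℕ) < 2)]

lemma key_sum (N : ℕ) :
    ∑ n ∈ Finset.range N, (uu n * ∏ j ∈ Finset.Ico (n + 1) N, (1 - qv ^ (j + 1))) =
      pochFin N - (-1 : R) ^ N * qv ^ (N * (N + 1) / 2) * PX N := by
  induction N with
  | zero => simp [pochFin, PX]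
  | succ N ih =>
    rw [Finset.sum_range_succ]
    have hIco : ∀ n ∈ Finset.range N,
        uu n * ∏ j ∈ Finset.Ico (n + 1) (N + 1), (1 - qv ^ (j + 1)) =
        (uu n * ∏ j ∈ Finset.Ico (n + 1) N, (1 - qv ^ (j + 1))) * (1 - qv ^ (N + 1)) := by
      intro n hn
      rw [Finset.prod_Ico_succ_top (by exact Nat.succ_le_of_lt (Finset.mem_range.mp hn)), mul_assoc]
    rw [Finset.sum_congr rfl hIco, ← Finset.sum_mul, ih, Finset.Ico_self, Finset.prod_empty,
      mul_one]
    rw [show pochFin (N + 1) = pochFin N * (1 - qv ^ (N + 1)) from by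
        rw [pochFin, pochFin, Finset.prod_range_succ],
      show PX (N + 1) = PX N * (1 - qv ^ (N + 3) * z1v * z2v ^ 2) from by
        rw [PX, PX, Finset.prod_range_succ],
      tri_succ, pow_add, uu,
      show (N + 1) * N / 2 = N * (N + 1) / 2 from by rw [Nat.mul_comm]]
    ring

lemma partial_sum (N i l : ℕ) :
    ∑ n ∈ Finset.range N, Bterm (n + 1) i l =
      fn 1 * ((qv * z2v) ^ (l - i) * z2v ^ i) -
        (-1 : R) ^ N * qv ^ (N * (N + 1) / 2) * PX N * (pochFin N)⁻¹ *
          (fn 1 * ((qv * z2v) ^ (l - i) * z2v ^ i)) := by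
  have hstep : ∀ n ∈ Finset.range N, Bterm (n + 1) i l =
      (uu n * ∏ j ∈ Finset.Ico (n + 1) N, (1 - qv ^ (j + 1))) *
        ((pochFin N)⁻¹ *
          (pochInf qv * pochInf (qv ^ 3 * z1v * z2v ^ 2) * (1 - qv * z2v))⁻¹ *
          ((qv * z2v) ^ (l - i) * z2v ^ i)) := by
    intro n hn
    have hnN : n + 1 ≤ N := Nat.succ_le_of_lt (Finset.mem_range.mp hn)
    have h1 : (1 : R) * (pochFin (n + 1))⁻¹ =
        (∏ j ∈ Finset.Ico (n + 1) N, (1 - qv ^ (j + 1))) * (pochFin N)⁻¹ := by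
      refine div_eq_div (constCoeff_pochFin _) (constCoeff_pochFin _) ?_
      rw [one_mul, pochFin, pochFin]
      exact ((Finset.prod_range_mul_prod_Ico _ hnN).symm.trans (mul_comm _ _))
    rw [one_mul] at h1
    rw [Bterm_eq n i l, h1]
    ring
  rw [Finset.sum_congr rfl hstep, ← Finset.sum_mul, key_sum, fn1_eq]
  have hunit : pochFin N * (pochFin N)⁻¹ = 1 :=
    MvPowerSeries.mul_inv_cancel _ (by rw [constCoeff_pochFin]; exact one_ne_zero)
  linear_combination ((pochInf qv * pochInf (qv ^ 3 * z1v * z2v ^ 2) * (1 - qv * z2v))⁻¹ *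
    ((qv * z2v) ^ (l - i) * z2v ^ i)) * hunit

/-- `B v_∞ = f₁ v₁`, where `v_∞ = ∑_{n≥1} fₙ vₙ` with `vₙ = [1, qⁿz₂, z₂]`:
componentwise, `∑_{n≥1} (B fₙ vₙ)_{i,l} = f₁ · (qz₂)^{l-i} z₂^i`. -/
theorem B_vinfty (k : ℕ) (hk : 1 ≤ k) (i l : ℕ) (hil : i ≤ l) (hlk : l ≤ k) :
    sumInf (fun n => Bterm n i l) = fn 1 * (qv * z2v) ^ (l - i) * z2v ^ i := by
  apply MvPowerSeries.ext
  intro d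
  have hL : MvPowerSeries.coeff d (sumInf (fun n => Bterm n i l)) =
      MvPowerSeries.coeff d
        (∑ n ∈ Finset.range (d 0 + d 1 + d 2 + 2), Bterm (n + 1) i l) := rfl
  rw [hL, partial_sum (d 0 + d 1 + d 2 + 2) i l, map_sub]
  set N := d 0 + d 1 + d 2 + 2 with hN
  have hz : MvPowerSeries.coeff d ((-1 : R) ^ N * qv ^ (N * (N + 1) / 2) * PX N *
      (pochFin N)⁻¹ * (fn 1 * ((qv * z2v) ^ (l - i) * z2v ^ i))) = 0 := by
    rw [show (-1 : R) ^ N * qv ^ (N * (N + 1) / 2) * PX N * (pochFin N)⁻¹ *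
        (fn 1 * ((qv * z2v) ^ (l - i) * z2v ^ i)) =
        qv ^ (N * (N + 1) / 2) * ((-1 : R) ^ N * PX N * (pochFin N)⁻¹ *
          (fn 1 * ((qv * z2v) ^ (l - i) * z2v ^ i))) from by ring]
    apply coeff_qpow_mul_eq_zero
    have h1 : d 0 < N := by omega
    have h2 : N ≤ N * (N + 1) / 2 := by
      rw [Nat.le_div_iff_mul_le (by norm_num : (0:ℕ) < 2)]
      exact Nat.mul_le_mul_left N (by omega)
    omega
  rw [hz, sub_zero, ← mul_assoc]

end Boson
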